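/- Fix a prime ℓ, n ≥ 0, and ν ∈ Part(n,ℓ). The map ψ^co_ν sending a tuple (λ^(ℓ^i))_{i≥0}, where λ^(ℓ^i) is an ℓ-regular partition of m_{ℓ^i}(ν), to the partition Σ_{i≥0} ℓ^i · (λ^(ℓ^i))ᵗ of n, is injective. -/

import Mathlib

/-- A function `f : ℕ → ℕ` is a partition of `m` if it is weakly decreasing,
has finite support, and its parts sum to `m`.  Here `f i` is the `(i+1)`-st part
`λ_{i+1}` of the partition. -/
def IsPartition (m : ℕ) (f : ℕ → ℕ) : Prop :=
  Antitone f ∧ (Function.support f).Finite ∧ ∑ᶠ i, f i = m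

/-- The transpose partition: `ptranspose f j` is the `(j+1)`-st part `(fᵗ)_{j+1}`
of the transpose, i.e. the number of indices `i` with `f i ≥ j + 1`. -/
noncomputable def ptranspose (f : ℕ → ℕ) : ℕ → ℕ :=
  fun j => {i : ℕ | j + 1 ≤ f i}.ncard

/-- `pmult f j` is the multiplicity `m_j(f)` of `j ≥ 1` as a part of `f`. -/
noncomputable def pmult (f : ℕ → ℕ) (j : ℕ) : ℕ :=
  {i : ℕ | f i = j}.ncard

/-- All (nonzero) parts of `f` are powers of `ℓ`. -/
def PartsPowersOf (ℓ : ℕ) (f : ℕ → ℕ) : Prop :=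
  ∀ i, f i ≠ 0 → ∃ k, f i = ℓ ^ k

/-- `f` is `ℓ`-regular: every part `j ≥ 1` has multiplicity `< ℓ`. -/
def IsRegularPartition (ℓ : ℕ) (f : ℕ → ℕ) : Prop :=
  ∀ j, 1 ≤ j → pmult f j < ℓ

/-- The combinatorial generalized Springer map: given a tuple `lam` where `lam i`
is (meant to be) an `ℓ`-regular partition of `m_{ℓ^i}(ν)`, it returns the
partition `Σ_{i ≥ 0} ℓ^i · (lam i)ᵗ` (componentwise operations). -/
noncomputable def psiCo (ℓ : ℕ) (lam : ℕ → ℕ → ℕ) : ℕ → ℕ :=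
  fun j => ∑ᶠ i, ℓ ^ i * ptranspose (lam i) j

/-- For fixed `ν ∈ Part(n,ℓ)`, the map `ψ^co_ν` sending a tuple of `ℓ`-regular
partitions `lam i` of `m_{ℓ^i}(ν)` to `Σ_{i≥0} ℓ^i · (lam i)ᵗ` is injective. -/
lemma finite_ge {f : ℕ → ℕ} (hf : (Function.support f).Finite) (j : ℕ) :
    {a : ℕ | j + 1 ≤ f a}.Finite :=
  hf.subset (fun a ha => by simp only [Set.mem_setOf_eq] at ha; simp only [Function.mem_support]; omega)

lemma finite_eq {f : ℕ → ℕ} (hf : (Function.support f).Finite) (j : ℕ) :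
    {a : ℕ | f a = j + 1}.Finite :=
  hf.subset (fun a ha => by simp only [Set.mem_setOf_eq] at ha; simp only [Function.mem_support]; omega)

lemma ptranspose_step {f : ℕ → ℕ} (hf : (Function.support f).Finite) (j : ℕ) :
    ptranspose f j = pmult f (j + 1) + ptranspose f (j + 1) := by
  have hset : {a : ℕ | j + 1 ≤ f a} = {a : ℕ | f a = j + 1} ∪ {a : ℕ | j + 1 + 1 ≤ f a} := by
    ext a; simp only [Set.mem_setOf_eq, Set.mem_union]; omega
  have hdisj : Disjoint {a : ℕ | f a = j + 1} {a : ℕ | j + 1 + 1 ≤ f a} := by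
    rw [Set.disjoint_left]; intro a ha hb
    simp only [Set.mem_setOf_eq] at ha hb; omega
  rw [ptranspose, pmult, hset,
    Set.ncard_union_eq hdisj (finite_eq hf j) (finite_ge hf (j + 1))]
  rfl

lemma part_le_sum {f : ℕ → ℕ} (hf : (Function.support f).Finite) (a : ℕ) :
    f a ≤ ∑ᶠ i, f i := by
  rw [finsum_eq_sum f hf]
  by_cases h : f a = 0
  · omega
  · exact Finset.single_le_sum (fun i _ => Nat.zero_le _)
      (hf.mem_toFinset.mpr h)

lemma partition_zero {f : ℕ → ℕ} (hf : IsPartition 0 f) : f = 0 := by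
  funext a
  have := part_le_sum hf.2.1 a
  rw [hf.2.2] at this
  simp only [Pi.zero_apply]
  omega

lemma ptranspose_zero (j : ℕ) : ptranspose (0 : ℕ → ℕ) j = 0 := by
  have : {a : ℕ | j + 1 ≤ (0 : ℕ → ℕ) a} = ∅ := by
    ext a; simp
  rw [ptranspose, this, Set.ncard_empty]

lemma pmult_zero (j : ℕ) : pmult (0 : ℕ → ℕ) (j + 1) = 0 := by
  have : {a : ℕ | (0 : ℕ → ℕ) a = j + 1} = ∅ := by
    ext a
    simp only [Pi.zero_apply, Set.mem_setOf_eq, Set.mem_empty_iff_false, iff_false]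
    omega
  rw [pmult, this, Set.ncard_empty]

lemma ptranspose_eq_zero_of_le {m : ℕ} {f : ℕ → ℕ} (hf : IsPartition m f) {j : ℕ}
    (hj : m ≤ j) : ptranspose f j = 0 := by
  have : {a : ℕ | j + 1 ≤ f a} = ∅ := by
    ext a
    simp only [Set.mem_setOf_eq, Set.mem_empty_iff_false, iff_false, not_le]
    have := part_le_sum hf.2.1 a
    rw [hf.2.2] at this; omega
  rw [ptranspose, this, Set.ncard_empty]

lemma lt_ptranspose_iff {f : ℕ → ℕ} (hmono : Antitone f)
    (hfin : (Function.support f).Finite) (a j : ℕ) :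
    a < ptranspose f j ↔ j + 1 ≤ f a := by
  constructor
  · intro h
    by_contra hc
    push_neg at hc
    have hsub : {b : ℕ | j + 1 ≤ f b} ⊆ Set.Iio a := by
      intro b hb
      simp only [Set.mem_setOf_eq] at hb
      simp only [Set.mem_Iio]
      by_contra hba
      push_neg at hba
      have := hmono hba
      omega
    have := Set.ncard_le_ncard hsub (Set.finite_Iio a)
    rw [show Set.Iio a = ↑(Finset.Iio a) from (Finset.coe_Iio a).symm,
      Set.ncard_coe_finset, Nat.card_Iio] at this
    rw [ptranspose] at h
    omega
  · intro h
    have hsub : Set.Iic a ⊆ {b : ℕ | j + 1 ≤ f b} := by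
      intro b hb
      simp only [Set.mem_Iic] at hb
      simp only [Set.mem_setOf_eq]
      have := hmono hb
      omega
    have := Set.ncard_le_ncard hsub (finite_ge hfin j)
    rw [show Set.Iic a = ↑(Finset.Iic a) from (Finset.coe_Iic a).symm,
      Set.ncard_coe_finset, Nat.card_Iic] at this
    rw [ptranspose]
    omega

lemma eq_of_ptranspose_eq {f g : ℕ → ℕ} (hf : Antitone f)
    (hff : (Function.support f).Finite) (hg : Antitone g)
    (hgf : (Function.support g).Finite)
    (h : ∀ j, ptranspose f j = ptranspose g j) : f = g := by
  funext a
  have key : ∀ j, j + 1 ≤ f a ↔ j + 1 ≤ g a := by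
    intro j
    rw [← lt_ptranspose_iff hf hff a j, ← lt_ptranspose_iff hg hgf a j, h j]
  rcases Nat.eq_zero_or_pos (f a) with h0 | h0
  · rcases Nat.eq_zero_or_pos (g a) with h1 | h1
    · omega
    · have := (key (g a - 1)).mpr (by omega); omega
  · have := (key (f a - 1)).mp (by omega)
    rcases Nat.eq_zero_or_pos (g a) with h1 | h1
    · omega
    · have := (key (g a - 1)).mpr (by omega); omega

lemma transpose_eq_of_pmult_eq {f g : ℕ → ℕ} (hff : (Function.support f).Finite)
    (hgf : (Function.support g).Finite) (M : ℕ)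
    (hfM : ∀ j, M ≤ j → ptranspose f j = 0)
    (hgM : ∀ j, M ≤ j → ptranspose g j = 0)
    (hpm : ∀ j, pmult f (j + 1) = pmult g (j + 1)) :
    ∀ j, ptranspose f j = ptranspose g j := by
  suffices H : ∀ k j, M ≤ j + k → ptranspose f j = ptranspose g j by
    intro j; exact H M j (by omega)
  intro k
  induction k with
  | zero => intro j hj; rw [hfM j (by omega), hgM j (by omega)]
  | succ k ih =>
    intro j hj
    by_cases h' : M ≤ j + k
    · exact ih j h'
    · rw [ptranspose_step hff, ptranspose_step hgf, hpm, ih (j + 1) (by omega)]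

lemma digits_unique {ℓ : ℕ} (hℓ : 2 ≤ ℓ) :
    ∀ (N : ℕ) (a b : ℕ → ℕ), (∀ i, a i < ℓ) → (∀ i, b i < ℓ) →
    (∑ i ∈ Finset.range N, ℓ ^ i * a i) = (∑ i ∈ Finset.range N, ℓ ^ i * b i) →
    ∀ i < N, a i = b i := by
  intro N
  induction N with
  | zero => intro a b _ _ _ i hi; omega
  | succ N ih =>
    intro a b ha hb hsum i hi
    rw [Finset.sum_range_succ', Finset.sum_range_succ'] at hsum
    have h0 : ∀ (c : ℕ → ℕ), (∑ i ∈ Finset.range N, ℓ ^ (i + 1) * c (i + 1)) =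
        ℓ * ∑ i ∈ Finset.range N, ℓ ^ i * c (i + 1) := by
      intro c; rw [Finset.mul_sum]
      apply Finset.sum_congr rfl; intro x _; ring
    rw [h0 a, h0 b, pow_zero, one_mul, one_mul] at hsum
    have ha0 : a 0 = b 0 := by
      have hmod := congrArg (· % ℓ) hsum
      simpa [Nat.mul_add_mod, Nat.mod_eq_of_lt (ha 0), Nat.mod_eq_of_lt (hb 0)] using hmod
    rw [ha0] at hsum
    have hsum' : (∑ i ∈ Finset.range N, ℓ ^ i * a (i + 1)) =
        ∑ i ∈ Finset.range N, ℓ ^ i * b (i + 1) :=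
      Nat.eq_of_mul_eq_mul_left (by omega) (Nat.add_right_cancel hsum)
    rcases i with _ | i
    · exact ha0
    · exact ih (fun t => a (t + 1)) (fun t => b (t + 1)) (fun t => ha _) (fun t => hb _)
        hsum' i (by omega)


theorem psiCo_injective (ℓ n : ℕ) (hℓ : ℓ.Prime)
    (ν : ℕ → ℕ) (hν : IsPartition n ν) (hpow : PartsPowersOf ℓ ν)
    (lam kap : ℕ → ℕ → ℕ)
    (hlam : ∀ i, IsPartition (pmult ν (ℓ ^ i)) (lam i) ∧ IsRegularPartition ℓ (lam i))
    (hkap : ∀ i, IsPartition (pmult ν (ℓ ^ i)) (kap i) ∧ IsRegularPartition ℓ (kap i))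
    (heq : psiCo ℓ lam = psiCo ℓ kap) :
    lam = kap := by
  have hℓ2 : 2 ≤ ℓ := hℓ.two_le
  set N := n + 1 with hN
  -- multiplicities of large powers vanish
  have hnub : ∀ a, ν a ≤ n := by
    intro a
    have := part_le_sum hν.2.1 a
    rwa [hν.2.2] at this
  have hmz : ∀ i, N ≤ i → pmult ν (ℓ ^ i) = 0 := by
    intro i hi
    have h2 : n < ℓ ^ i :=
      lt_of_lt_of_le (lt_of_lt_of_le (Nat.lt_two_pow_self (n := n))
        (Nat.pow_le_pow_right (by omega) (by omega)))
        (Nat.pow_le_pow_left hℓ2 i)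
    have hset : {a : ℕ | ν a = ℓ ^ i} = ∅ := by
      ext a
      simp only [Set.mem_setOf_eq, Set.mem_empty_iff_false, iff_false]
      have := hnub a; omega
    rw [pmult, hset, Set.ncard_empty]
  have hlz : ∀ i, N ≤ i → lam i = 0 := fun i hi =>
    partition_zero (hmz i hi ▸ (hlam i).1)
  have hkz : ∀ i, N ≤ i → kap i = 0 := fun i hi =>
    partition_zero (hmz i hi ▸ (hkap i).1)
  -- psiCo as a finite sum
  have hSum : ∀ (mu : ℕ → ℕ → ℕ), (∀ i, N ≤ i → mu i = 0) → ∀ j,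
      psiCo ℓ mu j = ∑ i ∈ Finset.range N, ℓ ^ i * ptranspose (mu i) j := by
    intro mu hmu j
    rw [psiCo]
    apply finsum_eq_finset_sum_of_support_subset
    intro i hi
    simp only [Function.mem_support] at hi
    simp only [Finset.coe_range, Set.mem_Iio]
    by_contra h
    push_neg at h
    rw [hmu i h, ptranspose_zero, mul_zero] at hi
    exact hi rfl
  have hS : ∀ j, (∑ i ∈ Finset.range N, ℓ ^ i * ptranspose (lam i) j) =
      ∑ i ∈ Finset.range N, ℓ ^ i * ptranspose (kap i) j := by
    intro j
    rw [← hSum lam hlz j, ← hSum kap hkz j, heq]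
  -- splitting off the digits
  have hsplit : ∀ (mu : ℕ → ℕ → ℕ), (∀ i, (Function.support (mu i)).Finite) → ∀ j,
      (∑ i ∈ Finset.range N, ℓ ^ i * ptranspose (mu i) j) =
      (∑ i ∈ Finset.range N, ℓ ^ i * pmult (mu i) (j + 1)) +
      ∑ i ∈ Finset.range N, ℓ ^ i * ptranspose (mu i) (j + 1) := by
    intro mu hmu j
    rw [← Finset.sum_add_distrib]
    apply Finset.sum_congr rfl
    intro i _
    rw [ptranspose_step (hmu i) j, Nat.mul_add]
  -- equality of multiplicities everywhere
  have hpm : ∀ i j, pmult (lam i) (j + 1) = pmult (kap i) (j + 1) := by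
    intro i j
    by_cases hi : i < N
    · have h1 := hsplit lam (fun i => (hlam i).1.2.1) j
      have h2 := hsplit kap (fun i => (hkap i).1.2.1) j
      have h3 := hS j
      have h4 := hS (j + 1)
      have hdig : (∑ i ∈ Finset.range N, ℓ ^ i * pmult (lam i) (j + 1)) =
          ∑ i ∈ Finset.range N, ℓ ^ i * pmult (kap i) (j + 1) := by omega
      exact digits_unique hℓ2 N (fun i => pmult (lam i) (j + 1))
        (fun i => pmult (kap i) (j + 1))
        (fun i => (hlam i).2 (j + 1) (by omega))
        (fun i => (hkap i).2 (j + 1) (by omega)) hdig i hi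
    · rw [hlz i (by omega), hkz i (by omega)]
  -- conclude
  funext i
  exact eq_of_ptranspose_eq (hlam i).1.1 (hlam i).1.2.1 (hkap i).1.1 (hkap i).1.2.1
    (transpose_eq_of_pmult_eq (hlam i).1.2.1 (hkap i).1.2.1 (pmult ν (ℓ ^ i))
      (fun j hj => ptranspose_eq_zero_of_le (hlam i).1 hj)
      (fun j hj => ptranspose_eq_zero_of_le (hkap i).1 hj)
      (fun j => hpm i j))
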